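/- arXiv:1211.0463 — 2 statements merged into one kernel-verified Lean document; each statement's English description precedes it below -/
import Mathlib

section
/- Let G be a finite simple graph with minimum degree δ and maximum degree Δ. If δ > log_2(e·(2Δ² − 2Δ + 1)), where e is Euler's number, then ch_σ^t(G) ≤ 2: for every linear order on the disjoint union V(G) ∪ E(G) and every assignment to each vertex and each edge of a set of two real numbers, there exists a total weighting taking each weight from its assigned set whose induced total sequence colouring of the vertices is proper. -/
/-!
Common definitions: total sequence colourings induced by a total weighting and a linear
order on the disjoint union `V(G) ⊕ E(G)` of a finite simple graph.
-/

open Finset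

variable {V : Type*}

/-- The elements of `V(G) ⊕ E(G)` relevant to the vertex `v` (namely `v` itself together
with the edges incident to `v`), sorted in increasing order with respect to the linear
order `σ` on `V(G) ⊕ E(G)`. -/
noncomputable def incTotal [Fintype V] [DecidableEq V] (G : SimpleGraph V) [DecidableRel G.Adj]
    (σ : LinearOrder (V ⊕ G.edgeSet)) (v : V) : List (V ⊕ G.edgeSet) :=
  letI := σ
  letI : DecidablePred (fun x : V ⊕ G.edgeSet =>
      Sum.elim (fun u : V => u = v) (fun e : G.edgeSet => v ∈ (e : Sym2 V)) x) :=
    Classical.decPred _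
  ((Finset.univ : Finset (V ⊕ G.edgeSet)).filter
    (fun x : V ⊕ G.edgeSet =>
      Sum.elim (fun u : V => u = v) (fun e : G.edgeSet => v ∈ (e : Sym2 V)) x)).sort σ.le

/-- The induced total sequence colouring: `c(v)` consists of `w(v)` together with the
weights `w(e)` of the edges `e` incident to `v`, all written in increasing order with
respect to `σ`. -/
noncomputable def totalSeqColor [Fintype V] [DecidableEq V] (G : SimpleGraph V)
    [DecidableRel G.Adj] (σ : LinearOrder (V ⊕ G.edgeSet)) (w : V ⊕ G.edgeSet → ℝ) (v : V) :
    List ℝ :=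
  (incTotal G σ v).map w

/-- The induced total sequence colouring is proper: adjacent vertices receive distinct
sequences. -/
def ProperTotalSeq [Fintype V] [DecidableEq V] (G : SimpleGraph V) [DecidableRel G.Adj]
    (σ : LinearOrder (V ⊕ G.edgeSet)) (w : V ⊕ G.edgeSet → ℝ) : Prop :=
  ∀ u v : V, G.Adj u v → totalSeqColor G σ w u ≠ totalSeqColor G σ w v

/-! ### Auxiliary machinery: a counting form of the Lovász Local Lemma. -/

attribute [local instance 0] Classical.propDecidable

set_option linter.unusedSectionVars false

section LLLCore

variable {ι : Type*} [Fintype ι] [DecidableEq ι] {κ : ι → Type*} [∀ i, Fintype (κ i)] [∀ i, Nonempty (κ i)]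

/-- `E` is determined by the coordinates in `I`. -/
def Det (E : Finset (∀ i, κ i)) (I : Finset ι) : Prop :=
  ∀ ω ω' : ∀ i, κ i, (∀ i ∈ I, ω i = ω' i) → ω ∈ E → ω' ∈ E

lemma Det.mono {E : Finset (∀ i, κ i)} {I I' : Finset ι} (h : Det E I) (hI : I ⊆ I') :
    Det E I' := fun ω ω' hag hω => h ω ω' (fun i hi => hag i (hI hi)) hω

lemma card_inter_mul_card {E F : Finset (∀ i, κ i)} {I J : Finset ι}
    (hE : Det E I) (hF : Det F J) (hIJ : Disjoint I J) :
    ((E ∩ F).card : ℝ) * (Fintype.card (∀ i, κ i) : ℝ) = (E.card : ℝ) * F.card := by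
  classical
  set P := Equiv.piEquivPiSubtypeProd (fun i => i ∈ I) κ with hP
  obtain ⟨g₀⟩ : Nonempty (∀ i : {x // ¬ x ∈ I}, κ i) := inferInstance
  obtain ⟨f₀⟩ : Nonempty (∀ i : {x // x ∈ I}, κ i) := inferInstance
  set E' : Finset (∀ i : {x // x ∈ I}, κ i) :=
    univ.filter (fun f => P.symm (f, g₀) ∈ E) with hE'
  set F' : Finset (∀ i : {x // ¬ x ∈ I}, κ i) :=
    univ.filter (fun g => P.symm (f₀, g) ∈ F) with hF'
  have hFc : Det F (univ.filter (fun i => ¬ i ∈ I)) := by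
    refine hF.mono ?_
    intro j hj
    simp only [mem_filter, mem_univ, true_and]
    exact fun hjI => (Finset.disjoint_right.1 hIJ hj) hjI
  have coordI : ∀ (f : ∀ i : {x // x ∈ I}, κ i) (g g' : ∀ i : {x // ¬ x ∈ I}, κ i),
      ∀ i ∈ I, P.symm (f, g) i = P.symm (f, g') i := by
    intro f g g' i hi
    simp [hP, Equiv.piEquivPiSubtypeProd_symm_apply, hi]
  have coordC : ∀ (f f' : ∀ i : {x // x ∈ I}, κ i) (g : ∀ i : {x // ¬ x ∈ I}, κ i),
      ∀ i ∈ univ.filter (fun i => ¬ i ∈ I), P.symm (f, g) i = P.symm (f', g) i := by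
    intro f f' g i hi
    simp only [mem_filter, mem_univ, true_and] at hi
    simp [hP, Equiv.piEquivPiSubtypeProd_symm_apply, hi]
  have memE : ∀ (f) (g), P.symm (f, g) ∈ E ↔ f ∈ E' := by
    intro f g
    simp only [hE', mem_filter, mem_univ, true_and]
    exact ⟨hE _ _ (coordI f g g₀), hE _ _ (coordI f g₀ g)⟩
  have memF : ∀ (f) (g), P.symm (f, g) ∈ F ↔ g ∈ F' := by
    intro f g
    simp only [hF', mem_filter, mem_univ, true_and]
    exact ⟨hFc _ _ (coordC f f₀ g), hFc _ _ (coordC f₀ f g)⟩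
  have himg : ∀ (S : Finset (∀ i, κ i)) (f g),
      (f, g) ∈ S.image P ↔ P.symm (f, g) ∈ S := by
    intro S f g
    constructor
    · rintro h
      obtain ⟨ω, hω, h2⟩ := Finset.mem_image.1 h
      rw [← h2, Equiv.symm_apply_apply]; exact hω
    · intro h
      exact Finset.mem_image.2 ⟨P.symm (f, g), h, by simp⟩
  have cardimg : ∀ (S : Finset (∀ i, κ i)), (S.image P).card = S.card :=
    fun S => Finset.card_image_of_injective S P.injective
  have hEimg : E.image P = E' ×ˢ univ := by
    ext ⟨f, g⟩
    rw [himg, Finset.mem_product]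
    simp [memE f g]
  have hFimg : F.image P = univ ×ˢ F' := by
    ext ⟨f, g⟩
    rw [himg, Finset.mem_product]
    simp [memF f g]
  have hEFimg : (E ∩ F).image P = E' ×ˢ F' := by
    ext ⟨f, g⟩
    rw [himg, Finset.mem_product, Finset.mem_inter, memE f g, memF f g]
  have hcard : Fintype.card (∀ i, κ i) =
      Fintype.card (∀ i : {x // x ∈ I}, κ i) * Fintype.card (∀ i : {x // ¬ x ∈ I}, κ i) := by
    rw [Fintype.card_congr P, Fintype.card_prod]
  have h1 : E.card = E'.card * (univ : Finset (∀ i : {x // ¬ x ∈ I}, κ i)).card := by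
    rw [← cardimg E, hEimg, Finset.card_product]
  have h2 : F.card = (univ : Finset (∀ i : {x // x ∈ I}, κ i)).card * F'.card := by
    rw [← cardimg F, hFimg, Finset.card_product]
  have h3 : (E ∩ F).card = E'.card * F'.card := by
    rw [← cardimg (E ∩ F), hEFimg, Finset.card_product]
  rw [h1, h2, h3, hcard]
  simp only [Finset.card_univ]
  push_cast
  ring

lemma halving {C : Finset (∀ i, κ i)} {I : Finset ι} (hC : Det C I)
    (a b : ι) (hab : b ≠ a) (haI : a ∉ I)
    (gval : ∀ i, κ i → ℝ) (hinj : Function.Injective (gval a))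
    (hcard : Fintype.card (κ a) = 2) :
    (C.filter (fun ω => gval a (ω a) = gval b (ω b))).card * 2 ≤ C.card := by
  classical
  set φ : (∀ i, κ i) → (∀ i : {x // x ≠ a}, κ i) := fun ω => fun i => ω i with hφ
  have key : ∀ r, ((C.filter (fun ω => gval a (ω a) = gval b (ω b))).filter
      (fun ω => φ ω = r)).card * 2 ≤ (C.filter (fun ω => φ ω = r)).card := by
    intro r
    set S1 := (C.filter (fun ω => gval a (ω a) = gval b (ω b))).filter (fun ω => φ ω = r)
    set S2 := C.filter (fun ω => φ ω = r) with hS2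
    have hfib : ∀ {ω ω' : ∀ i, κ i}, φ ω = φ ω' → ∀ i, i ≠ a → ω i = ω' i := by
      intro ω ω' h i hi
      exact congrFun h ⟨i, hi⟩
    have hS1 : S1.card ≤ 1 := by
      refine Finset.card_le_one.2 ?_
      intro ω hω ω' hω'
      simp only [S1, Finset.mem_filter] at hω hω'
      have hr : φ ω = φ ω' := hω.2.trans hω'.2.symm
      have hb : ω b = ω' b := hfib hr b hab
      have haa : ω a = ω' a := by
        apply hinj
        rw [hω.1.2, hω'.1.2, hb]
      funext i
      by_cases hia : i = a
      · subst hia; exact haa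
      · exact hfib hr i hia
    rcases Finset.eq_empty_or_nonempty S1 with he | ⟨ω, hω⟩
    · simp [he]
    · have hωm : ω ∈ C ∧ φ ω = r := by
        simp only [S1, Finset.mem_filter] at hω
        exact ⟨hω.1.1, hω.2⟩
      have h2 : 2 ≤ S2.card := by
        have : (univ : Finset (κ a)).card ≤ S2.card := by
          apply Finset.card_le_card_of_injOn (fun x => Function.update ω a x)
          · intro x _
            simp only [hS2, Finset.mem_coe, Finset.mem_filter]
            constructor
            · refine hC ω _ (fun i hi => ?_) hωm.1
              have hia : i ≠ a := by rintro rfl; exact haI hi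
              exact (Function.update_of_ne hia x ω).symm
            · rw [← hωm.2]
              funext i
              exact Function.update_of_ne i.2 x ω
          · intro x _ y _ hxy
            have := congrFun hxy a
            simpa using this
        simpa [hcard] using this
      calc S1.card * 2 ≤ 1 * 2 := by omega
        _ ≤ S2.card := by omega
  have e1 : (C.filter (fun ω => gval a (ω a) = gval b (ω b))).card =
      ∑ r : (∀ i : {x // x ≠ a}, κ i),
        ((C.filter (fun ω => gval a (ω a) = gval b (ω b))).filter (fun ω => φ ω = r)).card :=
    Finset.card_eq_sum_card_fiberwise (fun x _ => Finset.mem_univ _)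
  have e2 : C.card = ∑ r : (∀ i : {x // x ≠ a}, κ i),
      (C.filter (fun ω => φ ω = r)).card :=
    Finset.card_eq_sum_card_fiberwise (fun x _ => Finset.mem_univ _)
  rw [e1, e2, Finset.sum_mul]
  exact Finset.sum_le_sum (fun r _ => key r)

lemma chain_bound {n : ℕ} (a b : Fin n → ι)
    (ha : Function.Injective a) (hb : Function.Injective b)
    (hcross : ∀ i j i' j', a i = b j → a i' = b j' → a i = a i')
    (gval : ∀ i, κ i → ℝ) (hinj : ∀ i, Function.Injective (gval i))
    (hcard : ∀ i, Fintype.card (κ i) = 2)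
    (P : Finset (Fin n)) (hP : ∀ i ∈ P, a i ≠ b i) :
    (univ.filter (fun ω : ∀ i, κ i =>
        ∀ i ∈ P, gval (a i) (ω (a i)) = gval (b i) (ω (b i)))).card * 2 ^ P.card
      ≤ Fintype.card (∀ i, κ i) := by
  classical
  induction P using Finset.induction_on with
  | empty =>
    simp only [Finset.notMem_empty, false_implies, implies_true, Finset.filter_true,
      Finset.card_empty, pow_zero, mul_one]
    simp [Finset.card_univ]
  | @insert i P hiP IH =>
    have hPi : a i ≠ b i := hP i (Finset.mem_insert_self i P)
    have hP' : ∀ j ∈ P, a j ≠ b j := fun j hj => hP j (Finset.mem_insert_of_mem hj)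
    set vars : Finset ι := P.biUnion (fun j => {a j, b j}) with hvars
    set Bad : Finset (∀ i, κ i) :=
      univ.filter (fun ω => ∀ j ∈ P, gval (a j) (ω (a j)) = gval (b j) (ω (b j))) with hBad
    have hDet : Det Bad vars := by
      intro ω ω' hag hω
      simp only [hBad, Finset.mem_filter, Finset.mem_univ, true_and] at hω ⊢
      intro j hj
      have h1 : ω (a j) = ω' (a j) := hag _ (Finset.mem_biUnion.2 ⟨j, hj, by simp⟩)
      have h2 : ω (b j) = ω' (b j) := hag _ (Finset.mem_biUnion.2 ⟨j, hj, by simp⟩)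
      rw [← h1, ← h2]; exact hω j hj
    have hsplit : univ.filter (fun ω : ∀ i, κ i =>
        ∀ j ∈ insert i P, gval (a j) (ω (a j)) = gval (b j) (ω (b j))) =
        Bad.filter (fun ω => gval (a i) (ω (a i)) = gval (b i) (ω (b i))) := by
      ext ω
      simp only [hBad, Finset.mem_filter, Finset.mem_univ, true_and, Finset.mem_insert]
      constructor
      · intro h
        exact ⟨fun j hj => h j (Or.inr hj), h i (Or.inl rfl)⟩
      · rintro ⟨h1, h2⟩ j (rfl | hj)
        · exact h2
        · exact h1 j hj
    have hhalf : (Bad.filter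
        (fun ω => gval (a i) (ω (a i)) = gval (b i) (ω (b i)))).card * 2 ≤ Bad.card := by
      by_cases hcom : ∃ j', a i = b j'
      · -- fresh variable is `b i`
        have hfresh : b i ∉ vars := by
          intro hmem
          obtain ⟨j, hj, hbj⟩ := Finset.mem_biUnion.1 hmem
          simp only [Finset.mem_insert, Finset.mem_singleton] at hbj
          rcases hbj with hbj | hbj
          · obtain ⟨j', hj'⟩ := hcom
            have : a j = a i := hcross j i i j' hbj.symm hj'
            exact hPi (((ha this) ▸ hbj).symm)
          · exact hiP ((hb hbj.symm) ▸ hj)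
        have := halving hDet (b i) (a i) hPi hfresh gval (hinj (b i)) (hcard (b i))
        have hfe : Bad.filter (fun ω => gval (a i) (ω (a i)) = gval (b i) (ω (b i))) =
            Bad.filter (fun ω => gval (b i) (ω (b i)) = gval (a i) (ω (a i))) := by
          apply Finset.filter_congr
          intro ω _
          exact ⟨Eq.symm, Eq.symm⟩
        rw [hfe]; exact this
      · -- fresh variable is `a i`
        push_neg at hcom
        have hfresh : a i ∉ vars := by
          intro hmem
          obtain ⟨j, hj, haj⟩ := Finset.mem_biUnion.1 hmem
          simp only [Finset.mem_insert, Finset.mem_singleton] at haj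
          rcases haj with haj | haj
          · exact hiP ((ha haj) ▸ hj)
          · exact hcom j haj
        exact halving hDet (a i) (b i) (Ne.symm hPi) hfresh gval (hinj (a i)) (hcard (a i))
    rw [hsplit, Finset.card_insert_of_notMem hiP, pow_succ]
    calc (Bad.filter _).card * (2 ^ P.card * 2)
        = ((Bad.filter (fun ω => gval (a i) (ω (a i)) = gval (b i) (ω (b i)))).card * 2)
            * 2 ^ P.card := by ring
      _ ≤ Bad.card * 2 ^ P.card := Nat.mul_le_mul_right _ hhalf
      _ ≤ Fintype.card (∀ i, κ i) := IH hP'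

lemma LLL {J : Type*} [Fintype J] (A : J → Finset (∀ i, κ i)) (vbl : J → Finset ι)
    (hdet : ∀ j, Det (A j) (vbl j))
    (Γ : J → Finset J)
    (hΓ : ∀ j k, k ∉ Γ j → Disjoint (vbl j) (vbl k))
    (x : J → ℝ) (hx0 : ∀ j, 0 ≤ x j) (hx1 : ∀ j, x j < 1)
    (hp : ∀ j, ((A j).card : ℝ) ≤
      (x j * ∏ k ∈ Γ j \ {j}, (1 - x k)) * Fintype.card (∀ i, κ i)) :
    ∃ ω : ∀ i, κ i, ∀ j, ω ∉ A j := by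
  classical
  set N : ℝ := (Fintype.card (∀ i, κ i) : ℝ) with hN
  have hNpos : 0 < N := by
    rw [hN]; exact_mod_cast Fintype.card_pos
  set μ : Finset (∀ i, κ i) → ℝ := fun E => (E.card : ℝ) / N with hμ
  have μnn : ∀ E, 0 ≤ μ E := fun E => by positivity
  have μmono : ∀ {E F}, E ⊆ F → μ E ≤ μ F := fun {E F} h =>
    div_le_div_of_nonneg_right (by exact_mod_cast Finset.card_le_card h) hNpos.le
  set Bar : Finset J → Finset (∀ i, κ i) :=
    fun S => univ.filter (fun ω => ∀ k ∈ S, ω ∉ A k) with hBar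
  have memBar : ∀ {S ω}, ω ∈ Bar S ↔ ∀ k ∈ S, ω ∉ A k := by
    intro S ω; simp [hBar]
  have barMono : ∀ {S₂ S : Finset J}, S₂ ⊆ S → Bar S ⊆ Bar S₂ := by
    intro S₂ S h ω hω
    rw [memBar] at hω ⊢
    exact fun k hk => hω k (h hk)
  have barDet : ∀ S : Finset J, Det (Bar S) (S.biUnion vbl) := by
    intro S ω ω' hag hω
    rw [memBar] at hω ⊢
    intro k hk hω'
    refine hω k hk (hdet k ω' ω (fun i hi => ?_) hω')
    exact (hag i (Finset.mem_biUnion.2 ⟨k, hk, hi⟩)).symm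
  have peel : ∀ (S : Finset J) (k : J),
      μ (Bar (insert k S)) = μ (Bar S) - μ (Bar S ∩ A k) := by
    intro S k
    have h1 : Bar (insert k S) = Bar S \ A k := by
      ext ω
      simp only [memBar, Finset.mem_sdiff, Finset.mem_insert]
      constructor
      · intro h
        exact ⟨fun l hl => h l (Or.inr hl), h k (Or.inl rfl)⟩
      · rintro ⟨h1, h2⟩ l (rfl | hl)
        · exact h2
        · exact h1 l hl
    have h2' : (((Bar S ∩ A k).card : ℝ)) + ((Bar S \ A k).card : ℝ) = ((Bar S).card : ℝ) := by
      exact_mod_cast Finset.card_inter_add_card_sdiff (Bar S) (A k)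
    rw [h1]
    simp only [hμ]
    rw [eq_sub_iff_add_eq, ← add_div, add_comm]
    rw [h2']
  -- main induction
  have main : ∀ n : ℕ, ∀ S : Finset J, S.card ≤ n → ∀ j,
      μ (A j ∩ Bar S) ≤ x j * μ (Bar S) := by
    intro n
    induction n with
    | zero =>
      intro S hS j
      have hSe : S = ∅ := Finset.card_eq_zero.1 (Nat.le_zero.1 hS)
      subst hSe
      have hBe : Bar ∅ = univ := by
        ext ω; simp [memBar]
      rw [hBe]
      have h1 : μ (A j ∩ univ) ≤ μ (A j) := μmono (Finset.inter_subset_left)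
      have h2 : μ (A j) ≤ x j * ∏ k ∈ Γ j \ {j}, (1 - x k) := by
        rw [hμ, div_le_iff₀ hNpos]
        exact hp j
      have h3 : ∏ k ∈ Γ j \ {j}, (1 - x k) ≤ 1 := by
        apply Finset.prod_le_one
        · intro k _; linarith [hx1 k]
        · intro k _; linarith [hx0 k]
      have h4 : μ univ = 1 := by
        simp only [hμ, hN, Finset.card_univ]
        exact div_self (ne_of_gt (by exact_mod_cast Fintype.card_pos))
      rw [h4, mul_one]
      nlinarith [hx0 j, μnn (A j)]
    | succ m IH =>
      intro S hS j
      by_cases hjS : j ∈ S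
      · have : A j ∩ Bar S = ∅ := by
          ext ω
          simp only [Finset.mem_inter, Finset.notMem_empty, iff_false]
          rintro ⟨h1, h2⟩
          exact (memBar.1 h2) j hjS h1
        rw [this]
        have : μ ∅ = 0 := by simp [hμ]
        rw [this]
        exact mul_nonneg (hx0 j) (μnn _)
      · set S₂ := S \ Γ j with hS₂
        set N₁ := S ∩ Γ j with hN₁
        have hunion : S₂ ∪ N₁ = S := by
          rw [hS₂, hN₁]; rw [Finset.sdiff_union_inter]
        -- independence
        have hdisj : Disjoint (vbl j) (S₂.biUnion vbl) := by
          rw [Finset.disjoint_biUnion_right]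
          intro k hk
          exact hΓ j k (by rw [hS₂] at hk; exact (Finset.mem_sdiff.1 hk).2)
        have hindep : μ (A j ∩ Bar S₂) = μ (A j) * μ (Bar S₂) := by
          have := card_inter_mul_card (hdet j) (barDet S₂) hdisj
          rw [hμ]
          field_simp
          rw [← hN] at this
          nlinarith [this]
        -- step C : lower bound for Bar of S₂ ∪ T
        have stepC : ∀ T : Finset J, T ⊆ N₁ →
            (∏ k ∈ T, (1 - x k)) * μ (Bar S₂) ≤ μ (Bar (S₂ ∪ T)) := by
          intro T
          induction T using Finset.induction_on with
          | empty => intro _; simp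
          | @insert k T hkT IHT =>
            intro hins
            have hkN₁ : k ∈ N₁ := hins (Finset.mem_insert_self k T)
            have hTN₁ : T ⊆ N₁ := fun l hl => hins (Finset.mem_insert_of_mem hl)
            have hcard : (S₂ ∪ T).card ≤ m := by
              have hsub : S₂ ∪ T ⊆ S.erase k := by
                intro l hl
                rcases Finset.mem_union.1 hl with h | h
                · refine Finset.mem_erase.2 ⟨?_, (Finset.mem_sdiff.1 h).1⟩
                  rintro rfl
                  exact (Finset.mem_sdiff.1 h).2 (Finset.mem_inter.1 hkN₁).2
                · refine Finset.mem_erase.2 ⟨?_, (Finset.mem_inter.1 (hTN₁ h)).1⟩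
                  rintro rfl
                  exact hkT h
              calc (S₂ ∪ T).card ≤ (S.erase k).card := Finset.card_le_card hsub
                _ ≤ S.card - 1 := by
                    rw [Finset.card_erase_of_mem (Finset.mem_inter.1 hkN₁).1]
                _ ≤ m := by omega
            have hBi := IH (S₂ ∪ T) hcard k
            have hrw : S₂ ∪ insert k T = insert k (S₂ ∪ T) := by
              ext l; simp [Finset.mem_insert, Finset.mem_union, or_left_comm, or_comm]
            have hpeel := peel (S₂ ∪ T) k
            have hIc : μ (Bar (S₂ ∪ T) ∩ A k) = μ (A k ∩ Bar (S₂ ∪ T)) := by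
              rw [Finset.inter_comm]
            rw [hrw, hpeel, hIc]
            have hprod : ∏ l ∈ insert k T, (1 - x l) = (1 - x k) * ∏ l ∈ T, (1 - x l) :=
              Finset.prod_insert hkT
            rw [hprod]
            have hT := IHT hTN₁
            have h1xk : 0 ≤ 1 - x k := by linarith [hx1 k]
            nlinarith [μnn (Bar (S₂ ∪ T)), hBi, hT,
              mul_le_mul_of_nonneg_left hT h1xk]
        -- combine
        have c1 : μ (A j ∩ Bar S) ≤ μ (A j ∩ Bar S₂) :=
          μmono (Finset.inter_subset_inter (le_refl _) (barMono (by
            rw [hS₂]; exact Finset.sdiff_subset)))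
        have c2 : μ (A j) ≤ x j * ∏ k ∈ Γ j \ {j}, (1 - x k) := by
          rw [hμ, div_le_iff₀ hNpos]; exact hp j
        have hN₁sub : N₁ ⊆ Γ j \ {j} := by
          intro l hl
          refine Finset.mem_sdiff.2 ⟨(Finset.mem_inter.1 hl).2, ?_⟩
          simp only [Finset.mem_singleton]
          rintro rfl
          exact hjS (Finset.mem_inter.1 hl).1
        have c3 : ∏ k ∈ Γ j \ {j}, (1 - x k) ≤ ∏ k ∈ N₁, (1 - x k) := by
          rw [← Finset.prod_sdiff hN₁sub]
          have hle1 : ∏ k ∈ (Γ j \ {j}) \ N₁, (1 - x k) ≤ 1 := by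
            apply Finset.prod_le_one
            · intro k _; linarith [hx1 k]
            · intro k _; linarith [hx0 k]
          have hge0 : 0 ≤ ∏ k ∈ N₁, (1 - x k) := by
            apply Finset.prod_nonneg
            intro k _; linarith [hx1 k]
          nlinarith
        have c4 := stepC N₁ (le_refl _)
        rw [hunion] at c4
        have hprodN₁ : 0 ≤ ∏ k ∈ N₁, (1 - x k) := by
          apply Finset.prod_nonneg; intro k _; linarith [hx1 k]
        calc μ (A j ∩ Bar S) ≤ μ (A j ∩ Bar S₂) := c1
          _ = μ (A j) * μ (Bar S₂) := hindep
          _ ≤ (x j * ∏ k ∈ Γ j \ {j}, (1 - x k)) * μ (Bar S₂) := by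
              apply mul_le_mul_of_nonneg_right c2 (μnn _)
          _ ≤ (x j * ∏ k ∈ N₁, (1 - x k)) * μ (Bar S₂) := by
              have := mul_le_mul_of_nonneg_left c3 (hx0 j)
              exact mul_le_mul_of_nonneg_right this (μnn _)
          _ = x j * ((∏ k ∈ N₁, (1 - x k)) * μ (Bar S₂)) := by ring
          _ ≤ x j * μ (Bar S) := mul_le_mul_of_nonneg_left c4 (hx0 j)
  -- global lower bound
  have global : ∀ S : Finset J, (∏ k ∈ S, (1 - x k)) ≤ μ (Bar S) := by
    intro S
    induction S using Finset.induction_on with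
    | empty =>
      have : Bar ∅ = univ := by ext ω; simp [memBar]
      rw [this]
      have hu : μ univ = 1 := by
        simp only [hμ, hN, Finset.card_univ]
        exact div_self (ne_of_gt (by exact_mod_cast Fintype.card_pos))
      simp [hu]
    | @insert k S hkS IHS =>
      rw [peel S k, Finset.prod_insert hkS]
      have h1 := main S.card S (le_refl _) k
      have hIc : μ (Bar S ∩ A k) = μ (A k ∩ Bar S) := by rw [Finset.inter_comm]
      rw [hIc]
      have h1xk : 0 ≤ 1 - x k := by linarith [hx1 k]
      nlinarith [μnn (Bar S), mul_le_mul_of_nonneg_left IHS h1xk]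
  have hpos : 0 < μ (Bar univ) := by
    refine lt_of_lt_of_le ?_ (global univ)
    apply Finset.prod_pos
    intro k _
    linarith [hx1 k]
  have hne : (Bar univ).Nonempty := by
    rw [← Finset.card_pos]
    by_contra h
    push_neg at h
    have h0 : (Bar univ).card = 0 := by omega
    simp [hμ, h0] at hpos
  obtain ⟨ω, hω⟩ := hne
  exact ⟨ω, fun j => memBar.1 hω j (Finset.mem_univ j)⟩

lemma LLL_symmetric {J : Type*} [Fintype J] (A : J → Finset (∀ i, κ i)) (vbl : J → Finset ι)
    (hdet : ∀ j, Det (A j) (vbl j)) (Γ : J → Finset J)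
    (hΓ : ∀ j k, k ∉ Γ j → Disjoint (vbl j) (vbl k))
    (hself : ∀ j, j ∈ Γ j)
    (d : ℕ) (hd : 1 ≤ d) (hΓcard : ∀ j, (Γ j).card ≤ d + 1)
    (p : ℝ) (hpA : ∀ j, ((A j).card : ℝ) ≤ p * Fintype.card (∀ i, κ i))
    (hcond : Real.exp 1 * p * (d + 1) ≤ 1) (hp0 : 0 ≤ p) :
    ∃ ω : ∀ i, κ i, ∀ j, ω ∉ A j := by
  classical
  have hd1 : (0:ℝ) < (d:ℝ) := by exact_mod_cast hd
  have hd1' : (0:ℝ) < (d:ℝ) + 1 := by linarith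
  set x : J → ℝ := fun _ => 1/((d:ℝ)+1) with hx
  have hx0 : ∀ j, 0 ≤ x j := fun j => by positivity
  have hx1 : ∀ j, x j < 1 := fun j => by
    rw [hx]
    rw [div_lt_one hd1']
    linarith
  -- key analytic fact : 1 ≤ exp 1 * (d/(d+1))^d
  have hkey : 1 ≤ Real.exp 1 * ((d:ℝ)/((d:ℝ)+1))^d := by
    have h2 : (1 + 1/(d:ℝ))^d ≤ Real.exp 1 := by
      have := Real.add_one_le_exp (1/(d:ℝ))
      have hpow : (1/(d:ℝ) + 1)^d ≤ (Real.exp (1/(d:ℝ)))^d := by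
        apply pow_le_pow_left₀ (by positivity) this
      have hexp : (Real.exp (1/(d:ℝ)))^d = Real.exp ((d:ℝ) * (1/(d:ℝ)))  := by
        rw [Real.exp_nat_mul]
      rw [hexp] at hpow
      have : (d:ℝ) * (1/(d:ℝ)) = 1 := by field_simp
      rw [this] at hpow
      calc (1 + 1/(d:ℝ))^d = (1/(d:ℝ) + 1)^d := by ring_nf
        _ ≤ Real.exp 1 := hpow
    have h1 : ((d:ℝ)/((d:ℝ)+1)) * (1 + 1/(d:ℝ)) = 1 := by field_simp
    have h3 : (1:ℝ) = ((d:ℝ)/((d:ℝ)+1))^d * (1 + 1/(d:ℝ))^d := by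
      rw [← mul_pow, h1, one_pow]
    have h4 : ((d:ℝ)/((d:ℝ)+1))^d * (1 + 1/(d:ℝ))^d ≤ ((d:ℝ)/((d:ℝ)+1))^d * Real.exp 1 := by
      apply mul_le_mul_of_nonneg_left h2 (by positivity)
    rw [← h3] at h4
    linarith
  refine LLL A vbl hdet Γ hΓ x hx0 hx1 ?_
  intro j
  have hm : (Γ j \ {j}).card ≤ d := by
    have : Γ j \ {j} = (Γ j).erase j := by
      rw [Finset.erase_eq]
    rw [this, Finset.card_erase_of_mem (hself j)]
    have := hΓcard j
    omega
  have hxval : 1 - x j = (d:ℝ)/((d:ℝ)+1) := by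
    rw [hx]
    field_simp
    ring
  have hprod : ∏ k ∈ Γ j \ {j}, (1 - x k) = ((d:ℝ)/((d:ℝ)+1))^(Γ j \ {j}).card := by
    rw [Finset.prod_congr rfl (fun k _ => by rw [show (1 - x k) = (d:ℝ)/((d:ℝ)+1) from hxval])]
    rw [Finset.prod_const]
  have hfrac01 : 0 ≤ (d:ℝ)/((d:ℝ)+1) ∧ (d:ℝ)/((d:ℝ)+1) ≤ 1 := by
    constructor
    · positivity
    · rw [div_le_one hd1']; linarith
  have hpowmono : ((d:ℝ)/((d:ℝ)+1))^d ≤ ((d:ℝ)/((d:ℝ)+1))^(Γ j \ {j}).card :=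
    pow_le_pow_of_le_one hfrac01.1 hfrac01.2 hm
  have hple : p ≤ x j * ((d:ℝ)/((d:ℝ)+1))^d := by
    have hexp_pos := Real.exp_pos 1
    have hx_eq : x j = 1/((d:ℝ)+1) := rfl
    rw [hx_eq]

    have h5 : p * 1 ≤ p * (Real.exp 1 * ((d:ℝ)/((d:ℝ)+1))^d) := by
      apply mul_le_mul_of_nonneg_left _ hp0
      linarith
    have h6 : Real.exp 1 * p * ((d:ℝ)+1) ≤ 1 := hcond
    -- p*e*(d+1) ≤ 1 so p*e ≤ 1/(d+1), so p ≤ p*e*(d/(d+1))^d ≤ (1/(d+1))*(d/(d+1))^d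
    have h7 : p * Real.exp 1 * ((d:ℝ)/((d:ℝ)+1))^d * ((d:ℝ)+1) ≤ 1 * ((d:ℝ)/((d:ℝ)+1))^d := by
      calc p * Real.exp 1 * ((d:ℝ)/((d:ℝ)+1))^d * ((d:ℝ)+1)
          = (Real.exp 1 * p * ((d:ℝ)+1)) * ((d:ℝ)/((d:ℝ)+1))^d := by ring
        _ ≤ 1 * ((d:ℝ)/((d:ℝ)+1))^d := by
            apply mul_le_mul_of_nonneg_right h6 (by positivity)
    have h8 : p * ((d:ℝ)+1) ≤ ((d:ℝ)/((d:ℝ)+1))^d := by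
      calc p * ((d:ℝ)+1) = (p * 1) * ((d:ℝ)+1) := by ring
        _ ≤ (p * (Real.exp 1 * ((d:ℝ)/((d:ℝ)+1))^d)) * ((d:ℝ)+1) := by
            apply mul_le_mul_of_nonneg_right h5 (by linarith)
        _ = p * Real.exp 1 * ((d:ℝ)/((d:ℝ)+1))^d * ((d:ℝ)+1) := by ring
        _ ≤ 1 * ((d:ℝ)/((d:ℝ)+1))^d := h7
        _ = ((d:ℝ)/((d:ℝ)+1))^d := by ring
    rw [div_mul_eq_mul_div, one_mul, le_div_iff₀ hd1']
    linarith
  calc ((A j).card : ℝ) ≤ p * Fintype.card (∀ i, κ i) := hpA j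
    _ ≤ (x j * ∏ k ∈ Γ j \ {j}, (1 - x k)) * Fintype.card (∀ i, κ i) := by
        apply mul_le_mul_of_nonneg_right _ (by positivity)
        rw [hprod]
        calc p ≤ x j * ((d:ℝ)/((d:ℝ)+1))^d := hple
          _ ≤ x j * ((d:ℝ)/((d:ℝ)+1))^(Γ j \ {j}).card := by
              apply mul_le_mul_of_nonneg_left hpowmono (hx0 j)

end LLLCore

/-! ### Graph-specific auxiliary lemmas -/

def sumSubtypeEquiv {α β : Type*} (p : α → Prop) (q : β → Prop) :
    {x : α ⊕ β // Sum.elim p q x} ≃ {a // p a} ⊕ {b // q b} where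
  toFun x := match x with
    | ⟨Sum.inl a, h⟩ => Sum.inl ⟨a, h⟩
    | ⟨Sum.inr b, h⟩ => Sum.inr ⟨b, h⟩
  invFun x := match x with
    | Sum.inl ⟨a, h⟩ => ⟨Sum.inl a, h⟩
    | Sum.inr ⟨b, h⟩ => ⟨Sum.inr b, h⟩
  left_inv := by rintro ⟨(a | b), h⟩ <;> rfl
  right_inv := by rintro (⟨a, h⟩ | ⟨b, h⟩) <;> rfl

def edgeIncEquiv [Fintype V] [DecidableEq V] (G : SimpleGraph V) [DecidableRel G.Adj] (v : V) :
    {e : G.edgeSet // v ∈ (e : Sym2 V)} ≃ G.incidenceSet v where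
  toFun e := ⟨e.1.1, e.1.2, e.2⟩
  invFun e := ⟨⟨e.1, e.2.1⟩, e.2.2⟩
  left_inv := by rintro ⟨⟨e, he⟩, hv⟩; rfl
  right_inv := by rintro ⟨e, he, hv⟩; rfl

lemma mem_incTotal [Fintype V] [DecidableEq V] (G : SimpleGraph V) [DecidableRel G.Adj]
    (σ : LinearOrder (V ⊕ G.edgeSet)) (v : V) (x : V ⊕ G.edgeSet) :
    x ∈ incTotal G σ v ↔
      Sum.elim (fun u : V => u = v) (fun e : G.edgeSet => v ∈ (e : Sym2 V)) x := by
  unfold incTotal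
  rw [Finset.mem_sort, Finset.mem_filter]
  simp

lemma nodup_incTotal [Fintype V] [DecidableEq V] (G : SimpleGraph V) [DecidableRel G.Adj]
    (σ : LinearOrder (V ⊕ G.edgeSet)) (v : V) : (incTotal G σ v).Nodup := by
  unfold incTotal
  exact Finset.sort_nodup _ _

lemma card_edge_filter [Fintype V] [DecidableEq V] (G : SimpleGraph V) [DecidableRel G.Adj]
    (v : V) :
    (Finset.univ.filter (fun e : G.edgeSet => v ∈ (e : Sym2 V))).card = G.degree v := by
  rw [← Fintype.card_subtype]
  rw [Fintype.card_congr (edgeIncEquiv G v)]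
  exact SimpleGraph.card_incidenceSet_eq_degree G v

lemma length_incTotal [Fintype V] [DecidableEq V] (G : SimpleGraph V) [DecidableRel G.Adj]
    (σ : LinearOrder (V ⊕ G.edgeSet)) (v : V) :
    (incTotal G σ v).length = G.degree v + 1 := by
  unfold incTotal
  rw [Finset.length_sort, ← Fintype.card_subtype,
    Fintype.card_congr (sumSubtypeEquiv _ _), Fintype.card_sum]
  rw [Fintype.card_subtype_eq]
  rw [Fintype.card_congr (edgeIncEquiv G v), SimpleGraph.card_incidenceSet_eq_degree G v]
  omega

lemma sym2_exists_eq {α : Type*} (z : Sym2 α) : ∃ a b, z = s(a, b) := by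
  induction z using Sym2.ind with
  | _ a b => exact ⟨a, b, rfl⟩

set_option maxHeartbeats 1000000 in
/-- If `δ(G) > log₂(e·(2Δ(G)² − 2Δ(G) + 1))`, then `ch_σ^t(G) ≤ 2`. -/
theorem stmt_9 [Fintype V] [DecidableEq V] (G : SimpleGraph V) [DecidableRel G.Adj]
    (hδ : Real.logb 2 (Real.exp 1 *
        (2 * (G.maxDegree : ℝ) ^ 2 - 2 * (G.maxDegree : ℝ) + 1)) < (G.minDegree : ℝ))
    (σ : LinearOrder (V ⊕ G.edgeSet))
    (L : V ⊕ G.edgeSet → Finset ℝ) (hL : ∀ x, (L x).card = 2) :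
    ∃ w : V ⊕ G.edgeSet → ℝ, (∀ x, w x ∈ L x) ∧ ProperTotalSeq G σ w := by
  classical
  set δ := G.minDegree with hδdef
  set Δ := G.maxDegree with hΔdef
  have hLne : ∀ x, ∃ r, r ∈ L x := by
    intro x
    apply Finset.card_pos.mp
    rw [hL x]; norm_num
  -- trivial case: no edges
  by_cases hEne : Nonempty G.edgeSet
  swap
  · refine ⟨fun x => (hLne x).choose, fun x => (hLne x).choose_spec, ?_⟩
    intro u v huv _
    exact hEne ⟨⟨s(u, v), G.mem_edgeSet.mpr huv⟩⟩
  -- arithmetic consequences of the hypothesis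
  have hXpos : (0:ℝ) < 2 * (Δ:ℝ)^2 - 2*(Δ:ℝ) + 1 := by nlinarith [sq_nonneg (2*(Δ:ℝ) - 1)]
  have hQ : Real.exp 1 * (2 * (Δ:ℝ)^2 - 2*(Δ:ℝ) + 1) < (2:ℝ) ^ (δ:ℕ) := by
    have h2 : (0:ℝ) < Real.log 2 := Real.log_pos (by norm_num)
    have hx : (0:ℝ) < Real.exp 1 * (2 * (Δ:ℝ)^2 - 2*(Δ:ℝ) + 1) := by
      have := Real.exp_pos 1; nlinarith
    rw [Real.logb, div_lt_iff₀ h2] at hδ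
    have := (Real.lt_rpow_iff_log_lt hx (by norm_num : (0:ℝ) < 2)).mpr hδ
    rwa [Real.rpow_natCast] at this
  have hone : (1:ℝ) ≤ 2 * (Δ:ℝ)^2 - 2*(Δ:ℝ) + 1 := by
    have : (Δ:ℝ) = 0 ∨ 1 ≤ (Δ:ℝ) := by
      rcases Nat.eq_zero_or_pos Δ with h | h
      · left; exact_mod_cast h
      · right; exact_mod_cast h
    rcases this with h | h <;> nlinarith
  have hδ2 : 2 ≤ δ := by
    by_contra h
    push_neg at h
    have hle : ((2:ℝ)) ^ (δ:ℕ) ≤ 2 := by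
      have : δ = 0 ∨ δ = 1 := by omega
      rcases this with h' | h' <;> rw [h'] <;> norm_num
    have he2 : (2:ℝ) < Real.exp 1 := by
      have := Real.exp_one_gt_d9; linarith
    nlinarith [Real.exp_pos 1]
  -- the graph has an edge hence a vertex, so δ ≤ Δ
  obtain ⟨⟨e₀, he₀⟩⟩ := hEne
  have hδΔ : δ ≤ Δ := by
    obtain ⟨u₀, v₀, he⟩ := sym2_exists_eq e₀
    exact le_trans (G.minDegree_le_degree u₀) (G.degree_le_maxDegree u₀)
  have hΔ2 : 2 ≤ Δ := le_trans hδ2 hδΔ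
  -- parameters for the local lemma
  set d : ℕ := 2 * (Δ - 1) * Δ with hddef
  have hd : 1 ≤ d := by
    have h1 : 1 ≤ Δ - 1 := by omega
    calc 1 ≤ 2 * 1 * 2 := by norm_num
      _ ≤ 2 * (Δ - 1) * Δ := by
          apply Nat.mul_le_mul (Nat.mul_le_mul_left 2 h1) hΔ2
  have hdcast : ((d:ℕ):ℝ) + 1 = 2 * (Δ:ℝ)^2 - 2*(Δ:ℝ) + 1 := by
    rw [hddef]
    have h1 : (1:ℕ) ≤ Δ := by omega
    push_cast [Nat.cast_sub h1]
    ring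
  set p : ℝ := (1/2 : ℝ) ^ (δ:ℕ) with hpdef
  have hp0 : 0 ≤ p := by positivity
  have h2pow : (0:ℝ) < (2:ℝ)^(δ:ℕ) := by positivity
  have hcond : Real.exp 1 * p * ((d:ℝ) + 1) ≤ 1 := by
    have h1 : Real.exp 1 * ((d:ℝ)+1) < (2:ℝ)^(δ:ℕ) := by rw [hdcast]; exact hQ
    have hhalf : p = 1 / (2:ℝ)^(δ:ℕ) := by rw [hpdef, div_pow, one_pow]
    rw [hhalf]
    rw [show Real.exp 1 * (1 / (2:ℝ)^(δ:ℕ)) * ((d:ℝ)+1)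
        = (Real.exp 1 * ((d:ℝ)+1)) / (2:ℝ)^(δ:ℕ) by ring]
    rw [div_le_one h2pow]
    linarith
  -- the probability space and the events
  haveI hκne : ∀ x : V ⊕ G.edgeSet, Nonempty {r : ℝ // r ∈ L x} := by
    intro x
    obtain ⟨r, hr⟩ := hLne x
    exact ⟨⟨r, hr⟩⟩
  set wof : (∀ x : V ⊕ G.edgeSet, {r : ℝ // r ∈ L x}) → (V ⊕ G.edgeSet → ℝ) :=
    fun ω x => (ω x : ℝ) with hwof
  set A : G.edgeSet → Finset (∀ x : V ⊕ G.edgeSet, {r : ℝ // r ∈ L x}) :=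
    fun j => Finset.univ.filter (fun ω => ∃ u v : V, G.Adj u v ∧ s(u,v) = (j : Sym2 V) ∧
      totalSeqColor G σ (wof ω) u = totalSeqColor G σ (wof ω) v) with hA
  set vbl : G.edgeSet → Finset (V ⊕ G.edgeSet) :=
    fun j => Finset.univ.filter (fun x => Sum.elim (fun w : V => w ∈ (j : Sym2 V))
      (fun f : G.edgeSet => ∃ z ∈ (j : Sym2 V), z ∈ (f : Sym2 V)) x) with hvbl
  -- incTotal of an endpoint sits inside vbl
  have hIncSub : ∀ (u : V) (j : G.edgeSet), u ∈ (j : Sym2 V) →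
      ∀ x ∈ incTotal G σ u, x ∈ vbl j := by
    intro u j hu x hx
    rw [mem_incTotal] at hx
    rw [hvbl]
    simp only [Finset.mem_filter, Finset.mem_univ, true_and]
    cases x with
    | inl w => simp only [Sum.elim_inl] at hx ⊢; rw [hx]; exact hu
    | inr f => simp only [Sum.elim_inr] at hx ⊢; exact ⟨u, hu, hx⟩
  have hdet : ∀ j, Det (A j) (vbl j) := by
    intro j ω ω' hag hω
    rw [hA] at hω ⊢
    simp only [Finset.mem_filter, Finset.mem_univ, true_and] at hω ⊢
    obtain ⟨u, v, hadj, he, heq⟩ := hω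
    have hu : u ∈ (j : Sym2 V) := by rw [← he]; exact Sym2.mem_mk_left u v
    have hv : v ∈ (j : Sym2 V) := by rw [← he]; exact Sym2.mem_mk_right u v
    have hcongr : ∀ z : V, z ∈ (j : Sym2 V) →
        totalSeqColor G σ (wof ω') z = totalSeqColor G σ (wof ω) z := by
      intro z hz
      unfold totalSeqColor
      apply List.map_congr_left
      intro x hx
      have := hag x (hIncSub z j hz x hx)
      rw [hwof]
      simp only
      rw [this]
    exact ⟨u, v, hadj, he, by rw [hcongr u hu, hcongr v hv, heq]⟩
  set Γ : G.edgeSet → Finset G.edgeSet :=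
    fun j => Finset.univ.filter (fun k => ¬ Disjoint (vbl j) (vbl k)) with hΓdef
  have hΓ : ∀ j k, k ∉ Γ j → Disjoint (vbl j) (vbl k) := by
    intro j k hk
    rw [hΓdef] at hk
    simp only [Finset.mem_filter, Finset.mem_univ, true_and, not_not] at hk
    exact hk
  have hselfvbl : ∀ j : G.edgeSet, (vbl j).Nonempty := by
    intro j
    obtain ⟨u, v, hj⟩ := sym2_exists_eq (j : Sym2 V)
    refine ⟨Sum.inl u, ?_⟩
    rw [hvbl]
    simp only [Finset.mem_filter, Finset.mem_univ, true_and, Sum.elim_inl]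
    rw [hj]
    exact Sym2.mem_mk_left u v
  have hself : ∀ j, j ∈ Γ j := by
    intro j
    rw [hΓdef]
    simp only [Finset.mem_filter, Finset.mem_univ, true_and]
    exact Finset.not_disjoint_iff.mpr
      ⟨(hselfvbl j).choose, (hselfvbl j).choose_spec, (hselfvbl j).choose_spec⟩
  have key : ∃ ω : (∀ x : V ⊕ G.edgeSet, {r : ℝ // r ∈ L x}), ∀ j, ω ∉ A j := by
    refine LLL_symmetric A vbl hdet Γ hΓ hself d hd ?_ p ?_ hcond hp0
    · -- dependency degree bound
      intro j
      obtain ⟨u, v, huv⟩ := sym2_exists_eq (j : Sym2 V)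
      have hadj : G.Adj u v := G.mem_edgeSet.mp (by rw [← huv]; exact j.2)
      have hedgecard : ∀ w : V,
          (Finset.univ.filter (fun k : G.edgeSet => w ∈ (k : Sym2 V))).card = G.degree w :=
        card_edge_filter G
      set S : Finset V := ((G.neighborFinset u).erase v) ∪ ((G.neighborFinset v).erase u)
        with hS
      set T1 : Finset G.edgeSet :=
        ((Finset.univ.filter (fun k : G.edgeSet => u ∈ (k : Sym2 V))).erase j) ∪
        ((Finset.univ.filter (fun k : G.edgeSet => v ∈ (k : Sym2 V))).erase j) with hT1
      set T2 : Finset G.edgeSet := S.biUnion (fun w =>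
        Finset.univ.filter (fun k : G.edgeSet =>
          w ∈ (k : Sym2 V) ∧ ¬ u ∈ (k : Sym2 V) ∧ ¬ v ∈ (k : Sym2 V))) with hT2
      have huj : u ∈ (j : Sym2 V) := by rw [huv]; exact Sym2.mem_mk_left u v
      have hvj : v ∈ (j : Sym2 V) := by rw [huv]; exact Sym2.mem_mk_right u v
      have hsub : Γ j ⊆ insert j (T1 ∪ T2) := by
        intro k hk
        rw [hΓdef] at hk
        simp only [Finset.mem_filter, Finset.mem_univ, true_and] at hk
        obtain ⟨x, hxj, hxk⟩ := Finset.not_disjoint_iff.mp hk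
        rw [Finset.mem_insert]
        by_cases hkj : k = j
        · left; exact hkj
        right
        rw [hvbl] at hxj hxk
        simp only [Finset.mem_filter, Finset.mem_univ, true_and] at hxj hxk
        have hT1mem : (u ∈ (k : Sym2 V) ∨ v ∈ (k : Sym2 V)) → k ∈ T1 ∪ T2 := by
          intro h
          apply Finset.mem_union_left
          rw [hT1]
          rcases h with h | h
          · refine Finset.mem_union_left _ (Finset.mem_erase.mpr ⟨hkj, ?_⟩)
            simp only [Finset.mem_filter, Finset.mem_univ, true_and]; exact h
          · refine Finset.mem_union_right _ (Finset.mem_erase.mpr ⟨hkj, ?_⟩)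
            simp only [Finset.mem_filter, Finset.mem_univ, true_and]; exact h
        cases x with
        | inl w =>
          simp only [Sum.elim_inl] at hxj hxk
          rw [huv, Sym2.mem_iff] at hxj
          apply hT1mem
          rcases hxj with rfl | rfl
          · left; exact hxk
          · right; exact hxk
        | inr f =>
          simp only [Sum.elim_inr] at hxj hxk
          obtain ⟨z, hzj, hzf⟩ := hxj
          obtain ⟨z', hz'k, hz'f⟩ := hxk
          by_cases hz'uv : z' ∈ (j : Sym2 V)
          · apply hT1mem
            rw [huv, Sym2.mem_iff] at hz'uv
            rcases hz'uv with rfl | rfl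
            · left; exact hz'k
            · right; exact hz'k
          · by_cases huk : u ∈ (k : Sym2 V)
            · exact hT1mem (Or.inl huk)
            by_cases hvk : v ∈ (k : Sym2 V)
            · exact hT1mem (Or.inr hvk)
            apply Finset.mem_union_right
            rw [hT2]
            have hzz' : z' ≠ z := by rintro rfl; exact hz'uv hzj
            have hfval : (f : Sym2 V) = s(z', z) :=
              (Sym2.mem_and_mem_iff hzz').mp ⟨hz'f, hzf⟩
            have hadjzz : G.Adj z' z := G.mem_edgeSet.mp (by rw [← hfval]; exact f.2)
            rw [huv, Sym2.mem_iff] at hzj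
            apply Finset.mem_biUnion.mpr
            refine ⟨z', ?_, ?_⟩
            · rw [hS]
              have hz'u : z' ≠ u := fun h => hz'uv (h ▸ huj)
              have hz'v : z' ≠ v := fun h => hz'uv (h ▸ hvj)
              rcases hzj with rfl | rfl
              · refine Finset.mem_union_left _ (Finset.mem_erase.mpr ⟨hz'v, ?_⟩)
                rw [SimpleGraph.mem_neighborFinset]; exact hadjzz.symm
              · refine Finset.mem_union_right _ (Finset.mem_erase.mpr ⟨hz'u, ?_⟩)
                rw [SimpleGraph.mem_neighborFinset]; exact hadjzz.symm
            · simp only [Finset.mem_filter, Finset.mem_univ, true_and]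
              exact ⟨hz'k, huk, hvk⟩
      have hT1card : T1.card ≤ 2 * (Δ - 1) := by
        have h1 : ((Finset.univ.filter
            (fun k : G.edgeSet => u ∈ (k : Sym2 V))).erase j).card ≤ Δ - 1 := by
          rw [Finset.card_erase_of_mem (by
            simp only [Finset.mem_filter, Finset.mem_univ, true_and]; exact huj)]
          rw [hedgecard u]
          have := G.degree_le_maxDegree u
          omega
        have h2 : ((Finset.univ.filter
            (fun k : G.edgeSet => v ∈ (k : Sym2 V))).erase j).card ≤ Δ - 1 := by
          rw [Finset.card_erase_of_mem (by
            simp only [Finset.mem_filter, Finset.mem_univ, true_and]; exact hvj)]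
          rw [hedgecard v]
          have := G.degree_le_maxDegree v
          omega
        calc T1.card ≤ _ + _ := Finset.card_union_le _ _
          _ ≤ (Δ - 1) + (Δ - 1) := add_le_add h1 h2
          _ = 2 * (Δ - 1) := by ring
      have hScard : S.card ≤ 2 * (Δ - 1) := by
        have h1 : ((G.neighborFinset u).erase v).card ≤ Δ - 1 := by
          rw [Finset.card_erase_of_mem (by
            rw [SimpleGraph.mem_neighborFinset]; exact hadj)]
          rw [SimpleGraph.card_neighborFinset_eq_degree]
          have := G.degree_le_maxDegree u
          omega
        have h2 : ((G.neighborFinset v).erase u).card ≤ Δ - 1 := by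
          rw [Finset.card_erase_of_mem (by
            rw [SimpleGraph.mem_neighborFinset]; exact hadj.symm)]
          rw [SimpleGraph.card_neighborFinset_eq_degree]
          have := G.degree_le_maxDegree v
          omega
        calc S.card ≤ _ + _ := Finset.card_union_le _ _
          _ ≤ (Δ - 1) + (Δ - 1) := add_le_add h1 h2
          _ = 2 * (Δ - 1) := by ring
      have hT2card : T2.card ≤ (2 * (Δ - 1)) * (Δ - 1) := by
        rw [hT2]
        refine le_trans Finset.card_biUnion_le ?_
        have hbound : ∀ w ∈ S, (Finset.univ.filter (fun k : G.edgeSet =>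
            w ∈ (k : Sym2 V) ∧ ¬ u ∈ (k : Sym2 V) ∧ ¬ v ∈ (k : Sym2 V))).card ≤ Δ - 1 := by
          intro w hw
          have hwadj : ∃ z, (z = u ∨ z = v) ∧ G.Adj w z := by
            rw [hS] at hw
            rcases Finset.mem_union.mp hw with h | h
            · exact ⟨u, Or.inl rfl,
                ((SimpleGraph.mem_neighborFinset G u w).mp (Finset.mem_of_mem_erase h)).symm⟩
            · exact ⟨v, Or.inr rfl,
                ((SimpleGraph.mem_neighborFinset G v w).mp (Finset.mem_of_mem_erase h)).symm⟩
          obtain ⟨z, hzuv, hwz⟩ := hwadj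
          set ke : G.edgeSet := ⟨s(w, z), G.mem_edgeSet.mpr hwz⟩ with hke
          have hsub2 : (Finset.univ.filter (fun k : G.edgeSet =>
              w ∈ (k : Sym2 V) ∧ ¬ u ∈ (k : Sym2 V) ∧ ¬ v ∈ (k : Sym2 V))) ⊆
              (Finset.univ.filter (fun k : G.edgeSet => w ∈ (k : Sym2 V))).erase ke := by
            intro k hk
            simp only [Finset.mem_filter, Finset.mem_univ, true_and] at hk
            refine Finset.mem_erase.mpr ⟨?_, by
              simp only [Finset.mem_filter, Finset.mem_univ, true_and]; exact hk.1⟩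
            rintro rfl
            have hzk : z ∈ (ke : Sym2 V) := Sym2.mem_mk_right w z
            rcases hzuv with rfl | rfl
            · exact hk.2.1 hzk
            · exact hk.2.2 hzk
          calc (Finset.univ.filter (fun k : G.edgeSet =>
                w ∈ (k : Sym2 V) ∧ ¬ u ∈ (k : Sym2 V) ∧ ¬ v ∈ (k : Sym2 V))).card
              ≤ ((Finset.univ.filter
                  (fun k : G.edgeSet => w ∈ (k : Sym2 V))).erase ke).card :=
                Finset.card_le_card hsub2
            _ ≤ Δ - 1 := by
                rw [Finset.card_erase_of_mem (by
                  simp only [Finset.mem_filter, Finset.mem_univ, true_and]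
                  exact Sym2.mem_mk_left w z)]
                rw [hedgecard w]
                have := G.degree_le_maxDegree w
                omega
        calc ∑ w ∈ S, (Finset.univ.filter (fun k : G.edgeSet =>
              w ∈ (k : Sym2 V) ∧ ¬ u ∈ (k : Sym2 V) ∧ ¬ v ∈ (k : Sym2 V))).card
            ≤ ∑ _w ∈ S, (Δ - 1) := Finset.sum_le_sum hbound
          _ = S.card * (Δ - 1) := by rw [Finset.sum_const, smul_eq_mul]
          _ ≤ (2 * (Δ - 1)) * (Δ - 1) := Nat.mul_le_mul_right _ hScard
      have hid : 2 * (Δ - 1) + (2 * (Δ - 1)) * (Δ - 1) = d := by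
        rw [hddef]
        obtain ⟨D, hD⟩ := Nat.exists_eq_add_of_le (by omega : 1 ≤ Δ)
        rw [hD]
        simp only [Nat.add_sub_cancel_left]
        ring
      calc (Γ j).card ≤ (insert j (T1 ∪ T2)).card := Finset.card_le_card hsub
        _ ≤ (T1 ∪ T2).card + 1 := Finset.card_insert_le _ _
        _ ≤ (T1.card + T2.card) + 1 := by
            have := Finset.card_union_le T1 T2; omega
        _ ≤ (2 * (Δ - 1) + (2 * (Δ - 1)) * (Δ - 1)) + 1 := by
            have := add_le_add hT1card hT2card; omega
        _ ≤ d + 1 := by omega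
    · -- probability bound per edge
      intro j
      show ((A j).card : ℝ) ≤ p * (Fintype.card (∀ x : V ⊕ G.edgeSet, {r : ℝ // r ∈ L x}) : ℝ)
      obtain ⟨u, v, huv⟩ := sym2_exists_eq (j : Sym2 V)
      have hadj : G.Adj u v := G.mem_edgeSet.mp (by rw [← huv]; exact j.2)
      set B : Finset (∀ x : V ⊕ G.edgeSet, {r : ℝ // r ∈ L x}) :=
        Finset.univ.filter (fun ω =>
          totalSeqColor G σ (wof ω) u = totalSeqColor G σ (wof ω) v) with hB
      have hAB : A j ⊆ B := by
        intro ω hω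
        rw [hA] at hω
        simp only [Finset.mem_filter, Finset.mem_univ, true_and] at hω
        obtain ⟨u', v', hadj', he', heq'⟩ := hω
        rw [hB]
        simp only [Finset.mem_filter, Finset.mem_univ, true_and]
        rw [huv] at he'
        rcases Sym2.eq_iff.mp he' with ⟨rfl, rfl⟩ | ⟨rfl, rfl⟩
        · exact heq'
        · exact heq'.symm
      have hABR : ((A j).card : ℝ) ≤ (B.card : ℝ) := by
        exact_mod_cast Finset.card_le_card hAB
      by_cases hdeg : G.degree u = G.degree v
      swap
      · -- different degrees: B is empty
        have hBe : B = ∅ := by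
          rw [hB, Finset.filter_eq_empty_iff]
          intro ω _
          intro heq
          apply hdeg
          have h1 := congrArg List.length heq
          simp only [totalSeqColor, List.length_map, length_incTotal] at h1
          omega
        have hAe : A j = ∅ := Finset.subset_empty.mp (hBe ▸ hAB)
        rw [hAe]
        simp only [Finset.card_empty, Nat.cast_zero]
        positivity
      -- equal degrees : use the chain bound
      have hlen : (incTotal G σ u).length = (incTotal G σ v).length := by
        rw [length_incTotal, length_incTotal, hdeg]
      set a : Fin (incTotal G σ u).length → (V ⊕ G.edgeSet) := (incTotal G σ u).get with ha
      set b : Fin (incTotal G σ u).length → (V ⊕ G.edgeSet) :=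
        fun i => (incTotal G σ v).get (Fin.cast hlen i) with hb
      have hainj : Function.Injective a :=
        List.nodup_iff_injective_get.mp (nodup_incTotal G σ u)
      have hbinj : Function.Injective b := by
        intro i i' h
        have h2 := List.nodup_iff_injective_get.mp (nodup_incTotal G σ v) h
        have h3 : (Fin.cast hlen i).1 = (Fin.cast hlen i').1 := by rw [h2]
        exact Fin.ext h3
      have hamem : ∀ i, a i ∈ incTotal G σ u := fun i => List.get_mem _ _
      have hbmem : ∀ i, b i ∈ incTotal G σ v := fun i => List.get_mem _ _
      have hcommon : ∀ x, x ∈ incTotal G σ u → x ∈ incTotal G σ v → x = Sum.inr j := by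
        intro x hxu hxv
        rw [mem_incTotal] at hxu hxv
        cases x with
        | inl w =>
          simp only [Sum.elim_inl] at hxu hxv
          exact absurd (hxu.symm.trans hxv) hadj.ne
        | inr f =>
          simp only [Sum.elim_inr] at hxu hxv
          have h1 : (f : Sym2 V) = s(u, v) := (Sym2.mem_and_mem_iff hadj.ne).mp ⟨hxu, hxv⟩
          have h2 : (f : Sym2 V) = (j : Sym2 V) := by rw [h1, huv]
          exact congrArg Sum.inr (Subtype.ext h2)
      have hcross : ∀ i j' i' j'', a i = b j' → a i' = b j'' → a i = a i' := by
        intro i j1 i1 j2 h1 h2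
        have e1 : a i = Sum.inr j :=
          hcommon _ (hamem i) (h1 ▸ hbmem j1)
        have e2 : a i1 = Sum.inr j :=
          hcommon _ (hamem i1) (h2 ▸ hbmem j2)
        rw [e1, e2]
      set P : Finset (Fin (incTotal G σ u).length) :=
        Finset.univ.filter (fun i => ¬ (a i = b i)) with hPdef
      have hPprop : ∀ i ∈ P, a i ≠ b i := by
        intro i hi
        rw [hPdef] at hi
        simp only [Finset.mem_filter, Finset.mem_univ, true_and] at hi
        exact hi
      have hPcard : G.degree u ≤ P.card := by
        have hsplit := Finset.card_filter_add_card_filter_not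
          (s := (Finset.univ : Finset (Fin (incTotal G σ u).length)))
          (p := fun i => a i = b i)
        rw [← hPdef] at hsplit
        have htriv : (Finset.univ.filter
            (fun i : Fin (incTotal G σ u).length => a i = b i)).card ≤ 1 := by
          apply Finset.card_le_one.mpr
          intro i hi i' hi'
          simp only [Finset.mem_filter, Finset.mem_univ, true_and] at hi hi'
          have e1 : a i = Sum.inr j := hcommon _ (hamem i) (hi ▸ hbmem i)
          have e2 : a i' = Sum.inr j := hcommon _ (hamem i') (hi' ▸ hbmem i')
          exact hainj (e1.trans e2.symm)
        have hn : (Finset.univ : Finset (Fin (incTotal G σ u).length)).card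
            = G.degree u + 1 := by
          rw [Finset.card_univ, Fintype.card_fin, length_incTotal]
        omega
      have hδP : (δ:ℕ) ≤ P.card := le_trans (G.minDegree_le_degree u) hPcard
      -- apply the chain bound
      have hKcard : ∀ x : V ⊕ G.edgeSet, Fintype.card {r : ℝ // r ∈ L x} = 2 := by
        intro x
        exact (Fintype.card_coe (L x)).trans (hL x)
      have key := chain_bound (κ := fun x : V ⊕ G.edgeSet => {r : ℝ // r ∈ L x}) a b
        hainj hbinj hcross (fun x r => (r : ℝ)) (fun x => Subtype.val_injective)
        hKcard P hPprop
      -- B is contained in the chain event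
      have hBsub : B ⊆ Finset.univ.filter (fun ω : ∀ x : V ⊕ G.edgeSet, {r : ℝ // r ∈ L x} =>
          ∀ i ∈ P, ((ω (a i) : ℝ)) = ((ω (b i) : ℝ))) := by
        intro ω hω
        rw [hB] at hω
        simp only [Finset.mem_filter, Finset.mem_univ, true_and] at hω ⊢
        simp only [totalSeqColor] at hω
        intro i _
        have hi1 : (i:ℕ) < (List.map (wof ω) (incTotal G σ u)).length := by
          rw [List.length_map]; exact i.2
        have hi2 : (i:ℕ) < (List.map (wof ω) (incTotal G σ v)).length := by
          rw [List.length_map, ← hlen]; exact i.2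
        have h3 := List.getElem_of_eq hω hi1
        rw [List.getElem_map, List.getElem_map] at h3
        exact h3
      have hBnat : B.card * 2 ^ P.card ≤
          Fintype.card (∀ x : V ⊕ G.edgeSet, {r : ℝ // r ∈ L x}) :=
        le_trans (Nat.mul_le_mul_right _ (Finset.card_le_card hBsub)) key
      have hBnat2 : B.card * 2 ^ (δ:ℕ) ≤
          Fintype.card (∀ x : V ⊕ G.edgeSet, {r : ℝ // r ∈ L x}) := by
        refine le_trans ?_ hBnat
        exact Nat.mul_le_mul_left _ (Nat.pow_le_pow_right (by norm_num) hδP)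
      have hBR : (B.card : ℝ) * (2:ℝ) ^ (δ:ℕ) ≤
          (Fintype.card (∀ x : V ⊕ G.edgeSet, {r : ℝ // r ∈ L x}) : ℝ) := by
        exact_mod_cast hBnat2
      have hfin : (B.card : ℝ) ≤
          p * (Fintype.card (∀ x : V ⊕ G.edgeSet, {r : ℝ // r ∈ L x}) : ℝ) := by
        rw [hpdef, div_pow, one_pow]
        rw [div_mul_eq_mul_div, one_mul, le_div_iff₀ h2pow]
        linarith
      linarith
  obtain ⟨ω, hω⟩ := key
  refine ⟨wof ω, fun x => (ω x).2, ?_⟩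
  intro u v hadj heq
  have hj : s(u,v) ∈ G.edgeSet := G.mem_edgeSet.mpr hadj
  apply hω ⟨s(u,v), hj⟩
  rw [hA]
  simp only [Finset.mem_filter, Finset.mem_univ, true_and]
  exact ⟨u, v, hadj, rfl, heq⟩
end

section
/- Let G be a finite simple graph whose edge set E(G) carries a fixed linear order, let k ≥ 1 be an integer, and let the weights w(e) ∈ {1,…,k} be chosen independently and uniformly at random for each edge e (i.e., consider the uniform probability measure on the finite product space {1,…,k}^{E(G)}). For each edge xy let A_{xy} denote the event that the induced sequences satisfy c(x) = c(y). Fix an edge uv and a set F ⊆ E(G) \ {uv}, and suppose the set of events K = {A_f : f ∈ F} leaves the edge uv open. Then A_{uv} is mutually independent of K: for every subset F' ⊆ F, P(A_{uv} ∩ ⋂_{f∈F'} A_f) = P(A_{uv}) · P(⋂_{f∈F'} A_f). -/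
/-!
Common definitions: sequence colourings induced by an edge weighting and a linear
order on the edge set of a finite simple graph.
-/

open Finset

variable {V : Type*}

/-- The list of edges incident to `v`, sorted in increasing order with respect to the
linear order `σ` on `E(G)`. -/
noncomputable def incEdges [Fintype V] [DecidableEq V] (G : SimpleGraph V) [DecidableRel G.Adj]
    (σ : LinearOrder G.edgeSet) (v : V) : List G.edgeSet :=
  letI := σ
  ((Finset.univ : Finset G.edgeSet).filter (fun e : G.edgeSet => v ∈ (e : Sym2 V))).sort σ.le

/-- The induced sequence colouring: `c(v)` is the list of weights `w(e)` of the edges `e`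
incident to `v`, written in increasing order of `e` with respect to `σ`. -/
noncomputable def seqColor [Fintype V] [DecidableEq V] (G : SimpleGraph V) [DecidableRel G.Adj]
    (σ : LinearOrder G.edgeSet) {α : Type*} (w : G.edgeSet → α) (v : V) : List α :=
  (incEdges G σ v).map w

/-- The induced sequence colouring is proper: adjacent vertices receive distinct sequences. -/
def ProperSeq [Fintype V] [DecidableEq V] (G : SimpleGraph V) [DecidableRel G.Adj]
    (σ : LinearOrder G.edgeSet) (w : G.edgeSet → ℝ) : Prop :=
  ∀ u v : V, G.Adj u v → seqColor G σ w u ≠ seqColor G σ w v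

/-- The uniform probability of a set of outcomes in a finite space: `|S| / |Ω|`. -/
noncomputable def unifProb {Ω : Type*} (S : Set Ω) : ℝ :=
  (Nat.card S : ℝ) / (Nat.card Ω : ℝ)

/-- A random edge weighting with values in `{1,…,k}` is modelled by an element of the
finite product space `G.edgeSet → Fin k`; the weight of `e` is `(w e : ℕ) + 1 ∈ {1,…,k}`,
and the uniform measure on this product space chooses all weights independently and
uniformly at random. -/
noncomputable def randSeqColor [Fintype V] [DecidableEq V] (G : SimpleGraph V)
    [DecidableRel G.Adj] (σ : LinearOrder G.edgeSet) {k : ℕ} (w : G.edgeSet → Fin k)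
    (v : V) : List ℝ :=
  seqColor G σ (fun e => (((w e : ℕ) + 1 : ℕ) : ℝ)) v

/-- For an edge `f = xy`, the event `A_f` that the induced sequences of its two
endpoints coincide, `c(x) = c(y)`. -/
def seqEvent [Fintype V] [DecidableEq V] (G : SimpleGraph V) [DecidableRel G.Adj]
    (σ : LinearOrder G.edgeSet) (k : ℕ) (f : G.edgeSet) : Set (G.edgeSet → Fin k) :=
  {w | ∀ x y : V, (f : Sym2 V) = s(x, y) → randSeqColor G σ w x = randSeqColor G σ w y}

/-- The edge `e` is covered by the event `A_f`, `f = xy`, if `e` is incident to `x` or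
to `y`, i.e. `e` shares an endpoint with `f`. -/
def Covers [Fintype V] [DecidableEq V] (G : SimpleGraph V) [DecidableRel G.Adj]
    (f e : G.edgeSet) : Prop :=
  ∃ x : V, x ∈ (f : Sym2 V) ∧ x ∈ (e : Sym2 V)

/-- The edge `e` is uncovered by the set of events `{A_f : f ∈ F}` if no event in the set
covers it. -/
def UncoveredBy [Fintype V] [DecidableEq V] (G : SimpleGraph V) [DecidableRel G.Adj]
    (F : Finset G.edgeSet) (e : G.edgeSet) : Prop :=
  ∀ f ∈ F, ¬ Covers G f e

/-- The set of events `{A_f : f ∈ F}` leaves the edge `uv` open if, for every index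
`i < max (deg u) (deg v)`, at least one of the edges in `{e^u_i, e^v_i} \ {uv}`
(considering only those that exist, the `i`-th incident edges being taken with respect to
`σ`) is uncovered by the events. -/
def LeavesOpen [Fintype V] [DecidableEq V] (G : SimpleGraph V) [DecidableRel G.Adj]
    (σ : LinearOrder G.edgeSet) (F : Finset G.edgeSet) (u v : V) : Prop :=
  ∀ i : ℕ, i < max (G.degree u) (G.degree v) →
    ∃ ew : G.edgeSet,
      ((incEdges G σ u)[i]? = some ew ∨ (incEdges G σ v)[i]? = some ew) ∧
      (ew : Sym2 V) ≠ s(u, v) ∧ UncoveredBy G F ew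

/-! ### Auxiliary material for the proof -/

open Classical in
/-- Resample: replace the value at each `s i` by the value at `p i`. -/
noncomputable def resampleFn {E : Type*} {k d : ℕ} (s p : Fin d → E) (w : E → Fin k) :
    E → Fin k :=
  fun e => if h : ∃ i, s i = e then w (p h.choose) else w e

open Classical in
/-- Override: replace the value at each `s i` by `g i`. -/
noncomputable def overrideFn {E : Type*} {k d : ℕ} (s : Fin d → E) (a : E → Fin k)
    (g : Fin d → Fin k) : E → Fin k :=
  fun e => if h : ∃ i, s i = e then g h.choose else a e

lemma card_core {E : Type*} {k d : ℕ} (s p : Fin d → E)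
    (hs : Function.Injective s) (hps : ∀ i j, p i ≠ s j)
    (A C : Set (E → Fin k))
    (hA : ∀ w, w ∈ A ↔ ∀ i, w (s i) = w (p i))
    (hC : ∀ w w' : E → Fin k, (∀ e, e ∉ Set.range s → w e = w' e) → w ∈ C → w' ∈ C) :
    Nat.card C = Nat.card ↥(A ∩ C) * k ^ d := by
  classical
  have hchoose : ∀ (i : Fin d) (h : ∃ j, s j = s i), h.choose = i :=
    fun i h => hs h.choose_spec
  have hres_s : ∀ (w : E → Fin k) (i : Fin d), resampleFn s p w (s i) = w (p i) := by
    intro w i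
    have h : ∃ j, s j = s i := ⟨i, rfl⟩
    unfold resampleFn
    rw [dif_pos h, hchoose i h]
  have hres_not : ∀ (w : E → Fin k) (e : E), e ∉ Set.range s → resampleFn s p w e = w e := by
    intro w e he
    unfold resampleFn
    rw [dif_neg (show ¬ ∃ j, s j = e from he)]
  have hov_s : ∀ (a : E → Fin k) (g : Fin d → Fin k) (i : Fin d),
      overrideFn s a g (s i) = g i := by
    intro a g i
    have h : ∃ j, s j = s i := ⟨i, rfl⟩
    unfold overrideFn
    rw [dif_pos h, hchoose i h]
  have hov_not : ∀ (a : E → Fin k) (g : Fin d → Fin k) (e : E), e ∉ Set.range s →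
      overrideFn s a g e = a e := by
    intro a g e he
    unfold overrideFn
    rw [dif_neg (show ¬ ∃ j, s j = e from he)]
  have hp_not : ∀ i, p i ∉ Set.range s := by
    rintro i ⟨j, hj⟩
    exact hps i j hj.symm
  have hresA : ∀ w, resampleFn s p w ∈ A := by
    intro w
    rw [hA]
    intro i
    rw [hres_s, hres_not _ _ (hp_not i)]
  have e : ↥C ≃ ↥(A ∩ C) × (Fin d → Fin k) := by
    refine ⟨fun w => (⟨resampleFn s p w.1, hresA w.1,
        hC w.1 _ (fun e he => (hres_not w.1 e he).symm) w.2⟩, fun i => w.1 (s i)),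
      fun ag => ⟨overrideFn s ag.1.1 ag.2,
        hC ag.1.1 _ (fun e he => (hov_not _ _ e he).symm) ag.1.2.2⟩, ?_, ?_⟩
    · rintro ⟨w, hw⟩
      apply Subtype.ext
      funext e
      by_cases he : e ∈ Set.range s
      · obtain ⟨i, rfl⟩ := he
        exact hov_s _ _ i
      · exact (hov_not _ _ _ he).trans (hres_not w e he)
    · rintro ⟨⟨a, haA, haC⟩, g⟩
      refine Prod.ext (Subtype.ext ?_) (funext fun i => hov_s a g i)
      funext e
      by_cases he : e ∈ Set.range s
      · obtain ⟨i, rfl⟩ := he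
        exact (hres_s _ i).trans ((hov_not _ _ _ (hp_not i)).trans ((hA a).mp haA i).symm)
      · exact (hres_not _ _ he).trans (hov_not _ _ _ he)
  rw [Nat.card_congr e, Nat.card_prod]
  congr 1
  simp [Nat.card_eq_fintype_card]

lemma mem_incEdges [Fintype V] [DecidableEq V] (G : SimpleGraph V) [DecidableRel G.Adj]
    (σ : LinearOrder G.edgeSet) (x : V) (e : G.edgeSet) :
    e ∈ incEdges G σ x ↔ x ∈ (e : Sym2 V) := by
  unfold incEdges
  rw [Finset.mem_sort]
  simp

lemma nodup_incEdges [Fintype V] [DecidableEq V] (G : SimpleGraph V) [DecidableRel G.Adj]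
    (σ : LinearOrder G.edgeSet) (x : V) : (incEdges G σ x).Nodup := by
  unfold incEdges
  exact Finset.sort_nodup _ _

lemma length_incEdges [Fintype V] [DecidableEq V] (G : SimpleGraph V) [DecidableRel G.Adj]
    (σ : LinearOrder G.edgeSet) (x : V) : (incEdges G σ x).length = G.degree x := by
  unfold incEdges
  rw [Finset.length_sort, ← SimpleGraph.card_incidenceFinset_eq_degree]
  refine Finset.card_nbij (fun e => (e : Sym2 V)) ?_ ?_ ?_
  · intro a ha
    simp only [Finset.coe_filter, Set.mem_setOf_eq, Finset.mem_coe] at ha ⊢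
    rw [SimpleGraph.mem_incidenceFinset]
    exact ⟨a.2, ha.2⟩
  · intro a _ b _ h
    exact Subtype.ext h
  · intro y hy
    simp only [Finset.coe_filter, Finset.mem_coe, SimpleGraph.mem_incidenceFinset] at hy ⊢
    obtain ⟨hy1, hy2⟩ := hy
    exact ⟨⟨y, hy1⟩, ⟨Set.mem_setOf_eq ▸ ⟨Finset.mem_univ _, hy2⟩, rfl⟩⟩

lemma mem_of_getElem?_aux {α : Type*} {l : List α} {i : ℕ} {a : α} (h : l[i]? = some a) :
    a ∈ l := by
  rw [List.getElem?_eq_some_iff] at h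
  obtain ⟨hb, rfl⟩ := h
  exact List.getElem_mem hb

lemma map_eq_map_iff_len {α β : Type*} (f : α → β) {L M : List α} (h : L.length = M.length) :
    L.map f = M.map f ↔
      ∀ (i : ℕ) (h1 : i < L.length) (h2 : i < M.length), f (L[i]) = f (M[i]) := by
  constructor
  · intro hm i h1 h2
    have h3 := congrArg (fun l => l[i]?) hm
    simp only [List.getElem?_map, List.getElem?_eq_getElem, h1, h2,
      Option.map_some, Option.some.injEq] at h3
    exact h3
  · intro hp
    apply List.ext_getElem (by simpa using h)
    intro i h1 h2
    simp only [List.getElem_map]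
    exact hp i (by simpa using h1) (by simpa using h2)

/-- If the set of events `K = {A_f : f ∈ F}` leaves the edge `uv` open, then `A_{uv}` is
mutually independent of `K`: for every `F' ⊆ F`,
`P(A_{uv} ∩ ⋂_{f ∈ F'} A_f) = P(A_{uv}) · P(⋂_{f ∈ F'} A_f)`. -/
theorem stmt_11 [Fintype V] [DecidableEq V] (G : SimpleGraph V) [DecidableRel G.Adj]
    (σ : LinearOrder G.edgeSet) (k : ℕ) (hk : 1 ≤ k)
    (u v : V) (huv : G.Adj u v)
    (F : Finset G.edgeSet) (hF : (⟨s(u, v), G.mem_edgeSet.mpr huv⟩ : G.edgeSet) ∉ F)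
    (hopen : LeavesOpen G σ F u v)
    (F' : Finset G.edgeSet) (hF' : F' ⊆ F) :
    unifProb (seqEvent G σ k ⟨s(u, v), G.mem_edgeSet.mpr huv⟩ ∩ ⋂ f ∈ F', seqEvent G σ k f)
      = unifProb (seqEvent G σ k ⟨s(u, v), G.mem_edgeSet.mpr huv⟩)
        * unifProb (⋂ f ∈ F', seqEvent G σ k f) := by
  classical
  set uvE : G.edgeSet := ⟨s(u, v), G.mem_edgeSet.mpr huv⟩ with huvEdef
  set A : Set (G.edgeSet → Fin k) := seqEvent G σ k uvE with hAdef
  set B : Set (G.edgeSet → Fin k) := ⋂ f ∈ F', seqEvent G σ k f with hBdef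
  by_cases hdeg : G.degree u = G.degree v
  swap
  · have hA : A = (∅ : Set (G.edgeSet → Fin k)) := by
      ext w
      simp only [Set.mem_empty_iff_false, iff_false]
      intro hw
      apply hdeg
      have h := hw u v rfl
      have h2 := congrArg List.length h
      simpa [randSeqColor, seqColor, length_incEdges] using h2
    rw [hA, Set.empty_inter]
    have hz : Nat.card ↥(∅ : Set (G.edgeSet → Fin k)) = 0 := by simp
    simp [unifProb, hz]
  · set d := G.degree u with hd
    have hdu : (incEdges G σ u).length = d := length_incEdges G σ u
    have hdv : (incEdges G σ v).length = d := by rw [length_incEdges]; exact hdeg.symm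
    set Lu := incEdges G σ u with hLu
    set Lv := incEdges G σ v with hLv
    obtain ⟨au, hau⟩ : ∃ au : Fin d → G.edgeSet, ∀ i : Fin d, Lu[(i : ℕ)]? = some (au i) :=
      ⟨fun i => Lu[(i : ℕ)]'(by rw [hdu]; exact i.2), fun i => List.getElem?_eq_getElem _⟩
    obtain ⟨av, hav⟩ : ∃ av : Fin d → G.edgeSet, ∀ i : Fin d, Lv[(i : ℕ)]? = some (av i) :=
      ⟨fun i => Lv[(i : ℕ)]'(by rw [hdv]; exact i.2), fun i => List.getElem?_eq_getElem _⟩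
    have hmem_u : ∀ i : Fin d, u ∈ ((au i : G.edgeSet) : Sym2 V) := by
      intro i
      have : au i ∈ Lu := mem_of_getElem?_aux (hau i)
      exact (mem_incEdges G σ u (au i)).mp this
    have hmem_v : ∀ i : Fin d, v ∈ ((av i : G.edgeSet) : Sym2 V) := by
      intro i
      have : av i ∈ Lv := mem_of_getElem?_aux (hav i)
      exact (mem_incEdges G σ v (av i)).mp this
    have hcross : ∀ e : G.edgeSet, u ∈ (e : Sym2 V) → v ∈ (e : Sym2 V) → e = uvE := by
      intro e h1 h2
      exact Subtype.ext ((Sym2.mem_and_mem_iff huv.ne).mp ⟨h1, h2⟩)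
    -- choose the uncovered edges
    have hopen' : ∀ i : Fin d, ∃ ew : G.edgeSet,
        (Lu[(i : ℕ)]? = some ew ∨ Lv[(i : ℕ)]? = some ew) ∧
        (ew : Sym2 V) ≠ s(u, v) ∧ UncoveredBy G F ew := by
      intro i
      have hi : (i : ℕ) < max (G.degree u) (G.degree v) := by
        rw [← hdeg, ← hd, max_self]; exact i.2
      exact hopen i hi
    choose se hs1 hs2 hs3 using hopen'
    have hs1' : ∀ i : Fin d, se i = au i ∨ se i = av i := by
      intro i
      rcases hs1 i with h | h
      · left; rw [hau i] at h; exact (Option.some_injective _ h).symm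
      · right; rw [hav i] at h; exact (Option.some_injective _ h).symm
    have hsne : ∀ i, se i ≠ uvE := by
      intro i h
      exact hs2 i (congrArg Subtype.val h)
    have hau_inj : ∀ i j : Fin d, au i = au j → i = j := by
      intro i j h
      have h1 := hau i
      have h2 := hav i
      rw [h] at h1
      rw [List.getElem?_eq_some_iff] at h1
      obtain ⟨hb, hb'⟩ := h1
      have h1' := hau j
      rw [List.getElem?_eq_some_iff] at h1'
      obtain ⟨hc, hc'⟩ := h1'
      have := (List.Nodup.getElem_inj_iff (nodup_incEdges G σ u)).mp (hb'.trans hc'.symm)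
      exact Fin.ext this
    have hav_inj : ∀ i j : Fin d, av i = av j → i = j := by
      intro i j h
      have h1 := hav i
      rw [h] at h1
      rw [List.getElem?_eq_some_iff] at h1
      obtain ⟨hb, hb'⟩ := h1
      have h1' := hav j
      rw [List.getElem?_eq_some_iff] at h1'
      obtain ⟨hc, hc'⟩ := h1'
      have := (List.Nodup.getElem_inj_iff (nodup_incEdges G σ v)).mp (hb'.trans hc'.symm)
      exact Fin.ext this
    have hcross_uv : ∀ i j : Fin d, au i = av j → au i = uvE :=
      fun i j h => hcross (au i) (hmem_u i) (by rw [h]; exact hmem_v j)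
    -- partner edges
    set pa : Fin d → G.edgeSet := fun i => if se i = au i then av i else au i with hpa
    have hpair : ∀ i : Fin d,
        (se i = au i ∧ pa i = av i) ∨ (se i = av i ∧ pa i = au i) := by
      intro i
      by_cases h : se i = au i
      · exact Or.inl ⟨h, by rw [hpa]; simp [h]⟩
      · exact Or.inr ⟨(hs1' i).resolve_left h, by rw [hpa]; simp [h]⟩
    have hne_auav : ∀ i : Fin d, au i ≠ av i := by
      intro i h
      have h1 : au i = uvE := hcross_uv i i h
      rcases hs1' i with h2 | h2
      · exact hsne i (h2.trans h1)
      · exact hsne i (h2.trans (h.symm.trans h1))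
    have hs_inj : Function.Injective se := by
      intro i j h
      rcases hs1' i with h1 | h1 <;> rcases hs1' j with h2 | h2
      · exact hau_inj i j (by rw [← h1, ← h2]; exact h)
      · exfalso
        have hcr : au i = av j := by rw [← h1, h]; exact h2
        exact hsne i (h1.trans (hcross_uv i j hcr))
      · exfalso
        have hcr : au j = av i := by rw [← h2, ← h]; exact h1
        exact hsne j (h2.trans (hcross_uv j i hcr))
      · exact hav_inj i j (by rw [← h1, ← h2]; exact h)
    have hps : ∀ i j, pa i ≠ se j := by
      intro i j h
      rcases hpair i with ⟨hsi, hpi⟩ | ⟨hsi, hpi⟩ <;> rcases hs1' j with hj | hj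
      · have hcr : au j = av i := by rw [← hj, ← h]; exact hpi
        exact hsne j (hj.trans (hcross_uv j i hcr))
      · have hij : i = j := hav_inj i j (by rw [← hpi, h]; exact hj)
        subst hij
        exact hne_auav i (by rw [← hsi, ← h]; exact hpi)
      · have hij : i = j := hau_inj i j (by rw [← hpi, h]; exact hj)
        subst hij
        exact hne_auav i (by rw [← hpi, h]; exact hsi)
      · have hcr : au i = av j := by rw [← hpi, h]; exact hj
        exact hsne j (hj.trans (hcr.symm.trans (hcross_uv i j hcr)))
    -- characterisation of A
    have hcast : ∀ a b : Fin k, (((a : ℕ) + 1 : ℕ) : ℝ) = (((b : ℕ) + 1 : ℕ) : ℝ) → a = b := by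
      intro a b h
      have h2 : (a : ℕ) + 1 = (b : ℕ) + 1 := Nat.cast_injective h
      exact Fin.ext (by omega)
    have hlist : ∀ w : G.edgeSet → Fin k,
        randSeqColor G σ w u = randSeqColor G σ w v ↔
          ∀ i : Fin d, w (au i) = w (av i) := by
      intro w
      have hru : randSeqColor G σ w u = Lu.map (fun e => (((w e : ℕ) + 1 : ℕ) : ℝ)) := rfl
      have hrv : randSeqColor G σ w v = Lv.map (fun e => (((w e : ℕ) + 1 : ℕ) : ℝ)) := rfl
      rw [hru, hrv, map_eq_map_iff_len _ (hdu.trans hdv.symm)]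
      constructor
      · intro h i
        have h1 := h i (by rw [hdu]; exact i.2) (by rw [hdv]; exact i.2)
        have h2 : Lu[(i : ℕ)]'(by rw [hdu]; exact i.2) = au i := by
          have := hau i
          rw [List.getElem?_eq_getElem (by rw [hdu]; exact i.2)] at this
          exact Option.some_injective _ this
        have h3 : Lv[(i : ℕ)]'(by rw [hdv]; exact i.2) = av i := by
          have := hav i
          rw [List.getElem?_eq_getElem (by rw [hdv]; exact i.2)] at this
          exact Option.some_injective _ this
        rw [h2, h3] at h1
        exact hcast _ _ h1
      · intro h i h1 h2
        have h2' : Lu[i] = au ⟨i, by rw [← hdu]; exact h1⟩ := by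
          have := hau ⟨i, by rw [← hdu]; exact h1⟩
          rw [List.getElem?_eq_getElem h1] at this
          exact Option.some_injective _ this
        have h3' : Lv[i] = av ⟨i, by rw [← hdu]; exact h1⟩ := by
          have := hav ⟨i, by rw [← hdu]; exact h1⟩
          rw [List.getElem?_eq_getElem h2] at this
          exact Option.some_injective _ this
        rw [h2', h3', h ⟨i, by rw [← hdu]; exact h1⟩]
    have hmemA : ∀ w : G.edgeSet → Fin k,
        w ∈ A ↔ randSeqColor G σ w u = randSeqColor G σ w v := by
      intro w
      constructor
      · intro h; exact h u v rfl
      · intro h x y hxy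
        rcases Sym2.eq_iff.mp hxy with ⟨rfl, rfl⟩ | ⟨rfl, rfl⟩
        · exact h
        · exact h.symm
    have hA' : ∀ w : G.edgeSet → Fin k, w ∈ A ↔ ∀ i : Fin d, w (se i) = w (pa i) := by
      intro w
      rw [hmemA w, hlist w]
      constructor
      · intro h i
        rcases hpair i with ⟨hsi, hpi⟩ | ⟨hsi, hpi⟩
        · rw [hsi, hpi]; exact h i
        · rw [hsi, hpi]; exact (h i).symm
      · intro h i
        rcases hpair i with ⟨hsi, hpi⟩ | ⟨hsi, hpi⟩
        · rw [← hsi, ← hpi]; exact h i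
        · rw [← hsi, ← hpi]; exact (h i).symm
    -- B invariance
    have hB : ∀ w w' : G.edgeSet → Fin k, (∀ e, e ∉ Set.range se → w e = w' e) →
        w ∈ B → w' ∈ B := by
      intro w w' hagree hw
      rw [hBdef, Set.mem_iInter₂] at hw ⊢
      intro f hf x y hxy
      have key : ∀ z : V, z ∈ (f : Sym2 V) →
          randSeqColor G σ w' z = randSeqColor G σ w z := by
        intro z hz
        show (incEdges G σ z).map _ = (incEdges G σ z).map _
        apply List.map_congr_left
        intro e he
        have hze : z ∈ (e : Sym2 V) := (mem_incEdges G σ z e).mp he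
        have hcov : Covers G f e := ⟨z, hz, hze⟩
        have hnr : e ∉ Set.range se := by
          rintro ⟨i, rfl⟩
          exact hs3 i f (hF' hf) hcov
        rw [hagree e hnr]
      have hx : x ∈ (f : Sym2 V) := by rw [hxy]; exact Sym2.mem_mk_left x y
      have hy : y ∈ (f : Sym2 V) := by rw [hxy]; exact Sym2.mem_mk_right x y
      rw [key x hx, key y hy]
      exact hw f hf x y hxy
    -- counting
    have h1 := card_core se pa hs_inj hps A Set.univ hA'
      (fun _ w' _ _ => Set.mem_univ w')
    rw [Set.inter_univ] at h1
    have h1' : Nat.card (G.edgeSet → Fin k) = Nat.card ↥A * k ^ d := by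
      rw [← Nat.card_univ, h1]
    have h2 := card_core se pa hs_inj hps A B hA' hB
    have hpos : 0 < Nat.card (G.edgeSet → Fin k) := by
      haveI : Nonempty (Fin k) := ⟨⟨0, hk⟩⟩
      exact Nat.card_pos
    have hN : ((Nat.card (G.edgeSet → Fin k) : ℝ)) ≠ 0 :=
      Nat.cast_ne_zero.mpr hpos.ne'
    unfold unifProb
    rw [div_mul_div_comm, div_eq_div_iff hN (mul_ne_zero hN hN)]
    have e1 : ((Nat.card (G.edgeSet → Fin k)) : ℝ) = (Nat.card ↥A : ℝ) * (k : ℝ) ^ d := by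
      exact_mod_cast h1'
    have e2 : ((Nat.card ↥B) : ℝ) = (Nat.card ↥(A ∩ B) : ℝ) * (k : ℝ) ^ d := by
      exact_mod_cast h2
    rw [e2]
    linear_combination ((Nat.card ↥(A ∩ B) : ℝ) *
      (Nat.card (G.edgeSet → Fin k) : ℝ)) * e1
end
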